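/- arXiv:2107.09743 — 2 statements merged into one kernel-verified Lean document; each statement's English description precedes it below -/
import Mathlib

section
/- For all n ≥ 2 and all 1 ≤ j ≤ n-1, 3·a(n-1,j)/b(n-1,j) ≤ θ(n), with equality when j = n-1. Hence max_{1 ≤ j ≤ n-1} 3·a(n-1,j)/b(n-1,j) = θ(n). -/
/-- `F n = (a n ·, b n ·, φ n)` from the recursive construction;
    `φ 1 := 1` by convention. -/
def F : ℕ → ((ℕ → ℚ) × (ℕ → ℚ) × ℚ)
  | 0 => (fun _ => 0, fun _ => 0, 1)
  | 1 => (fun j => if j = 1 then 1 else 0, fun j => if j = 1 then 1 else 0, 1)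
  | (n+2) =>
      let p := F (n+1)
      let th : ℚ := 3 * p.1 (n+1)
      let ph : ℚ := if n = 0 then 4
        else 4 * ∑ j ∈ Finset.Icc 1 (n+1), (th * p.2.1 j - 3 * p.1 j)
      (fun j => if j = n+2 then ph else 4 * p.1 j,
       fun j => if j = n+2 then 1 else (1 + th) * p.2.1 j,
       ph)

/-- coefficient `a(n,j)` -/
def a (n j : ℕ) : ℚ := (F n).1 j
/-- coefficient `b(n,j)` -/
def b (n j : ℕ) : ℚ := (F n).2.1 j
/-- `φ(n)` -/
def phi (n : ℕ) : ℚ := (F n).2.2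
/-- `θ(n) = 3·a(n-1,n-1)` -/
def theta (n : ℕ) : ℚ := 3 * a (n-1) (n-1)

lemma a_succ (n j : ℕ) : a (n+2) j = if j = n+2 then phi (n+2) else 4 * a (n+1) j := by
  unfold a phi; rw [F]

lemma b_succ (n j : ℕ) : b (n+2) j = if j = n+2 then 1 else (1 + 3 * a (n+1) (n+1)) * b (n+1) j := by
  unfold a b; rw [F]

lemma phi_succ (n : ℕ) : phi (n+2) = if n = 0 then 4
    else 4 * ∑ j ∈ Finset.Icc 1 (n+1), (3 * a (n+1) (n+1) * b (n+1) j - 3 * a (n+1) j) := by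
  unfold a b phi; rw [F]

lemma a_one : a 1 1 = 1 := by unfold a; rw [F]; simp
lemma b_one : b 1 1 = 1 := by unfold b; rw [F]; simp

lemma key : ∀ m : ℕ, 1 ≤ m →
    (∀ j, 1 ≤ j → j ≤ m → 1 ≤ b m j) ∧
    b m m = 1 ∧
    1 ≤ a m m ∧
    (∀ j, 1 ≤ j → j < m → 6 * a m j ≤ 3 * a m m * b m j) := by
  intro m hm
  induction m, hm using Nat.le_induction with
  | base =>
    refine ⟨?_, b_one, a_one.ge, ?_⟩
    · intro j h1 h2
      have : j = 1 := le_antisymm h2 h1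
      subst this; exact b_one.ge
    · intro j h1 h2; omega
  | succ m hm ih =>
    obtain ⟨k, rfl⟩ : ∃ k, m = k + 1 := ⟨m - 1, by omega⟩
    obtain ⟨hb1, hbm, ham, hsl⟩ := ih
    set m := k + 1 with hmk
    -- θ = 3 * a m m
    have hθ : (3:ℚ) ≤ 3 * a m m := by linarith
    -- φ (m+1) ≥ 2 * (3 * a m m)  (or φ = 4 if k = 0)
    have hphi : 4 ≤ phi (m + 1) ∧ 2 * (3 * a m m) ≤ phi (m+1) ∨ k = 0 ∧ phi (m+1) = 4 := by
      rcases Nat.eq_zero_or_pos k with hk | hk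
      · right
        refine ⟨hk, ?_⟩
        rw [hmk, hk, phi_succ]; simp
      · left
        have hk0 : k ≠ 0 := hk.ne'
        rw [hmk, phi_succ, if_neg hk0]
        have hterm : ∀ j ∈ Finset.Icc 1 (k+1), (0:ℚ) ≤ 3 * a (k+1) (k+1) * b (k+1) j - 3 * a (k+1) j := by
          intro j hj
          simp only [Finset.mem_Icc] at hj
          rcases Nat.lt_or_ge j (k+1) with hlt | hge
          · have h6 := hsl j hj.1 hlt
            have hb := hb1 j hj.1 hj.2
            nlinarith
          · have : j = k + 1 := le_antisymm hj.2 hge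
            subst this
            rw [hbm]; ring_nf; simp
        have h1mem : 1 ∈ Finset.Icc 1 (k+1) := by simp
        have hsum : 3 * a (k+1) (k+1) * b (k+1) 1 - 3 * a (k+1) 1 ≤
            ∑ j ∈ Finset.Icc 1 (k+1), (3 * a (k+1) (k+1) * b (k+1) j - 3 * a (k+1) j) :=
          Finset.single_le_sum hterm h1mem
        have hb11 : (1:ℚ) ≤ b (k+1) 1 := hb1 1 le_rfl (by omega)
        have h61 : 6 * a (k+1) 1 ≤ 3 * a (k+1) (k+1) * b (k+1) 1 := by
          rcases Nat.lt_or_ge 1 (k+1) with h | h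
          · exact hsl 1 le_rfl h
          · omega
        constructor
        · nlinarith
        · nlinarith
    -- unfold successor values
    have haS : ∀ j, a (m+1) j = if j = m + 1 then phi (m+1) else 4 * a m j := fun j => a_succ k j
    have hbS : ∀ j, b (m+1) j = if j = m + 1 then 1 else (1 + 3 * a m m) * b m j := fun j => b_succ k j
    have hamm1 : a (m+1) (m+1) = phi (m+1) := by rw [haS]; simp
    have hphi4 : 4 ≤ phi (m+1) := by
      rcases hphi with ⟨h, _⟩ | ⟨_, h⟩
      · exact h
      · rw [h]
    refine ⟨?_, ?_, ?_, ?_⟩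
    · intro j h1 h2
      rw [hbS]
      by_cases hj : j = m + 1
      · simp [hj]
      · rw [if_neg hj]
        have hb := hb1 j h1 (by omega)
        nlinarith
    · rw [hbS]; simp
    · rw [hamm1]; linarith
    · intro j h1 h2
      have hj : j ≠ m + 1 := by omega
      rw [haS, hbS, if_neg hj, if_neg hj, hamm1]
      by_cases hjm : j = m
      · subst hjm
        rw [hbm]
        have ha3 : 3 * a m m ≤ phi (m+1) * (1 + 3 * a m m) := by
          rcases hphi with ⟨h4, h2θ⟩ | ⟨hk0, hp4⟩
          · nlinarith
          · rw [hp4]; nlinarith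
        nlinarith
      · have hjlt : j < m := by omega
        have h6 := hsl j h1 hjlt
        have hb := hb1 j h1 (by omega)
        have hθb : (0:ℚ) ≤ 3 * a m m * b m j := by nlinarith
        -- need 6 * (4 * a m j) ≤ 3 * phi (m+1) * ((1 + 3 * a m m) * b m j)
        have key2 : 4 * (3 * a m m) ≤ 3 * phi (m+1) * (1 + 3 * a m m) := by
          rcases hphi with ⟨h4, h2θ⟩ | ⟨hk0, hp4⟩
          · nlinarith
          · rw [hp4]
            -- k = 0 : m = 1, a 1 1 = 1
            rw [hmk, hk0] at *
            rw [a_one]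
            norm_num
        nlinarith

theorem ratio_max (n : ℕ) (hn : 2 ≤ n) (hne : (Finset.Icc 1 (n-1)).Nonempty) :
    (∀ j ∈ Finset.Icc 1 (n-1), 3 * a (n-1) j / b (n-1) j ≤ theta n) ∧
    3 * a (n-1) (n-1) / b (n-1) (n-1) = theta n ∧
    (Finset.Icc 1 (n-1)).sup' hne (fun j => 3 * a (n-1) j / b (n-1) j) = theta n := by
  set m := n - 1 with hm
  have hm1 : 1 ≤ m := by omega
  obtain ⟨hb1, hbm, ham, hsl⟩ := key m hm1
  have hθ : theta n = 3 * a m m := rfl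
  have hle : ∀ j ∈ Finset.Icc 1 m, 3 * a m j / b m j ≤ theta n := by
    intro j hj
    simp only [Finset.mem_Icc] at hj
    have hb := hb1 j hj.1 hj.2
    have hbpos : (0:ℚ) < b m j := by linarith
    rw [hθ, div_le_iff₀ hbpos]
    rcases Nat.lt_or_ge j m with hlt | hge
    · have h6 := hsl j hj.1 hlt
      have : (0:ℚ) ≤ 3 * a m m * b m j := by nlinarith
      linarith
    · have : j = m := le_antisymm hj.2 hge
      subst this
      rw [hbm]; linarith
  have heq : 3 * a m m / b m m = theta n := by
    rw [hbm, hθ, div_one]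
  refine ⟨hle, heq, le_antisymm (Finset.sup'_le hne _ hle) ?_⟩
  have hmem : m ∈ Finset.Icc 1 m := by simp [hm1]
  calc theta n = 3 * a m m / b m m := heq.symm
    _ ≤ _ := Finset.le_sup' (fun j => 3 * a m j / b m j) hmem
end

section
/- For all n ≥ 4, ∑_{j=1}^{n-2} b(n-2, j) ≤ (5/48)·φ(n-1). -/
/-- `S m = ∑_{j=1}^m b(m,j)` -/
def S (m : ℕ) : ℚ := ∑ j ∈ Finset.Icc 1 m, b m j
/-- `A m = ∑_{j=1}^m a(m,j)` -/
def A (m : ℕ) : ℚ := ∑ j ∈ Finset.Icc 1 m, a m j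

lemma a_diag (n : ℕ) : a (n+1) (n+1) = phi (n+1) := by
  cases n <;> simp [a, phi, F]

lemma b_rec (n j : ℕ) (hj : j ≤ n+1) :
    b (n+2) j = (1 + 3 * phi (n+1)) * b (n+1) j := by
  have h := a_diag n
  simp only [a] at h
  simp only [b, F.eq_3]
  rw [if_neg (by omega), h]

lemma b_diag (n : ℕ) : b (n+2) (n+2) = 1 := by
  simp [b, F.eq_3]

lemma a_rec (n j : ℕ) (hj : j ≤ n+1) :
    a (n+2) j = 4 * a (n+1) j := by
  simp only [a, F.eq_3]
  rw [if_neg (by omega)]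

lemma phi_rec (n : ℕ) :
    phi (n+3) = 4 * ∑ j ∈ Finset.Icc 1 (n+2),
      (3 * phi (n+2) * b (n+2) j - 3 * a (n+2) j) := by
  have h := a_diag (n+1)
  simp only [a, b] at h ⊢
  rw [phi, show n+3 = (n+1)+2 from rfl, F.eq_3, if_neg n.succ_ne_zero, h]

lemma S_rec (n : ℕ) : S (n+2) = 1 + (1 + 3 * phi (n+1)) * S (n+1) := by
  unfold S
  rw [Finset.sum_Icc_succ_top (by omega : 1 ≤ n+2)]
  rw [b_diag, Finset.mul_sum]
  rw [Finset.sum_congr rfl (fun j hj => b_rec n j (Finset.mem_Icc.mp hj).2)]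
  ring

lemma A_rec (n : ℕ) : A (n+2) = 4 * A (n+1) + phi (n+2) := by
  unfold A
  rw [Finset.sum_Icc_succ_top (by omega : 1 ≤ n+2)]
  rw [a_diag (n+1), Finset.mul_sum]
  rw [Finset.sum_congr rfl (fun j hj => a_rec n j (Finset.mem_Icc.mp hj).2)]

lemma phi_eq (n : ℕ) : phi (n+3) = 12 * (phi (n+2) * S (n+2) - A (n+2)) := by
  rw [phi_rec, Finset.sum_sub_distrib, ← Finset.mul_sum, ← Finset.mul_sum]
  unfold S A
  ring

lemma phi2 : phi 2 = 4 := by simp [phi, F]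

lemma S2 : S 2 = 5 := by
  have h : Finset.Icc 1 2 = {1, 2} := by decide
  simp [S, h, b, F]
  norm_num

lemma A2 : A 2 = 8 := by
  have h : Finset.Icc 1 2 = {1, 2} := by decide
  simp [A, h, a, F]
  norm_num

lemma invar (n : ℕ) : 4 ≤ phi (n+2) ∧ 1 ≤ S (n+2) ∧ 0 ≤ A (n+2) ∧
    5 * A (n+2) ≤ (5 * phi (n+2) - 4) * S (n+2) := by
  induction n with
  | zero => rw [phi2, S2, A2]; norm_num
  | succ m ih =>
    obtain ⟨hP, hT, hB, hM⟩ := ih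
    have hphi : phi (m+3) = 12 * (phi (m+2) * S (m+2) - A (m+2)) := phi_eq m
    have hS : S (m+3) = 1 + (1 + 3 * phi (m+2)) * S (m+2) := S_rec (m+1)
    have hA : A (m+3) = 4 * A (m+2) + phi (m+3) := A_rec (m+1)
    have hphi4 : 4 ≤ phi (m+3) := by nlinarith
    refine ⟨hphi4, by nlinarith, by nlinarith, ?_⟩
    rw [hS, hA, hphi]
    nlinarith [mul_le_mul hM (le_refl (S (m+2))) (by linarith) (by nlinarith),
      mul_nonneg (sub_nonneg.mpr hT) (sub_nonneg.mpr hP)]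

theorem sum_b_bound (n : ℕ) (hn : 4 ≤ n) :
    ∑ j ∈ Finset.Icc 1 (n-2), b (n-2) j ≤ (5/48 : ℚ) * phi (n-1) := by
  obtain ⟨k, rfl⟩ : ∃ k, n = k + 4 := ⟨n - 4, by omega⟩
  have h2 : k + 4 - 2 = k + 2 := by omega
  have h1 : k + 4 - 1 = k + 3 := by omega
  rw [h2, h1]
  obtain ⟨hP, hT, hB, hM⟩ := invar k
  have hphi : phi (k+3) = 12 * (phi (k+2) * S (k+2) - A (k+2)) := phi_eq k
  show S (k+2) ≤ _
  rw [hphi]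
  nlinarith
end
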